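/- If H is an m-step subquasi-ideal of a Leibniz algebra L over a field F, then [L,H^{(m+n+1)}] + [H^{(m+n+1)},L] ⊆ H^{(m+n)} for all n ≥ 1, where H^{(k)} denotes the k-th term of the derived series of H. -/

import Mathlib

/-! Basic definitions for (right) Leibniz algebras given by a bilinear bracket
on a vector space, following Towers, "Quasi-ideals of Leibniz algebras". -/

section LeibnizDefs

variable {F L : Type*} [Field F] [AddCommGroup L] [Module F L]

/-- The (right) Leibniz identity for a bilinear bracket `b`:
`[x,[y,z]] = [[x,y],z] - [[x,z],y]`. -/
def IsLeibniz (b : L →ₗ[F] L →ₗ[F] L) : Prop :=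
  ∀ x y z : L, b x (b y z) = b (b x y) z - b (b x z) y

/-- `[A,C]`: the span of all brackets `[a,c]` with `a ∈ A`, `c ∈ C`. -/
def bspan (b : L →ₗ[F] L →ₗ[F] L) (A C : Submodule F L) : Submodule F L :=
  Submodule.span F {z : L | ∃ a ∈ A, ∃ c ∈ C, z = b a c}

/-- A subalgebra is a subspace `H` with `[H,H] ⊆ H`. -/
def IsSubalgebra (b : L →ₗ[F] L →ₗ[F] L) (H : Submodule F L) : Prop :=
  bspan b H H ≤ H

/-- An ideal is a subspace `A` with `[A,L] + [L,A] ⊆ A`. -/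
def IsIdeal (b : L →ₗ[F] L →ₗ[F] L) (A : Submodule F L) : Prop :=
  bspan b A ⊤ ⊔ bspan b ⊤ A ≤ A

/-- A quasi-ideal of `L` is a subspace `H` with `[H,K] + [K,H] ⊆ H + K`
for every subspace `K` of `L`. -/
def IsQuasiIdeal (b : L →ₗ[F] L →ₗ[F] L) (H : Submodule F L) : Prop :=
  ∀ K : Submodule F L, bspan b H K ⊔ bspan b K H ≤ H ⊔ K

/-- `H` is a quasi-ideal of the subalgebra `E`: `H ⊆ E` and
`[H,K] + [K,H] ⊆ H + K` for every subspace `K` of `E`. -/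
def IsQuasiIdealIn (b : L →ₗ[F] L →ₗ[F] L) (H E : Submodule F L) : Prop :=
  H ≤ E ∧ ∀ K : Submodule F L, K ≤ E → bspan b H K ⊔ bspan b K H ≤ H ⊔ K

/-- `H` is an `m`-step subquasi-ideal of `L`: there is a chain of subalgebras
`H = H_m qu H_{m-1} qu ... qu H_0 = L`, each a quasi-ideal of the next.
(Here `C i` is `H_i`.) -/
def IsSubquasiIdealSteps (b : L →ₗ[F] L →ₗ[F] L) (m : ℕ) (H : Submodule F L) : Prop :=
  ∃ C : ℕ → Submodule F L, C 0 = ⊤ ∧ C m = H ∧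
    (∀ i ≤ m, IsSubalgebra b (C i)) ∧
    ∀ i < m, IsQuasiIdealIn b (C (i + 1)) (C i)

/-- `H` is a subquasi-ideal of `L` if it is an `m`-step subquasi-ideal for some `m`. -/
def IsSubquasiIdeal (b : L →ₗ[F] L →ₗ[F] L) (H : Submodule F L) : Prop :=
  ∃ m : ℕ, IsSubquasiIdealSteps b m H

/-- Lower central series: `lowerCentral b K n` is `K^{n+1}` in the paper's notation,
i.e. `K^1 = K`, `K^{k+1} = [K^k, K]`. -/
def lowerCentral (b : L →ₗ[F] L →ₗ[F] L) (K : Submodule F L) : ℕ → Submodule F L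
  | 0 => K
  | n + 1 => bspan b (lowerCentral b K n) K

/-- Derived series: `derSeries b H n` is `H^{(n+1)}` in the paper's notation,
i.e. `H^{(1)} = H`, `H^{(k+1)} = [H^{(k)}, H^{(k)}]`. -/
def derSeries (b : L →ₗ[F] L →ₗ[F] L) (H : Submodule F L) : ℕ → Submodule F L
  | 0 => H
  | n + 1 => bspan b (derSeries b H n) (derSeries b H n)

/-- The core `H_L` of `H`: the sum of all ideals of `L` contained in `H`. -/
def coreOf (b : L →ₗ[F] L →ₗ[F] L) (H : Submodule F L) : Submodule F L :=
  sSup {A : Submodule F L | IsIdeal b A ∧ A ≤ H}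

/-- A derivation of the bracket `b`. -/
def IsDerivation (b : L →ₗ[F] L →ₗ[F] L) (d : L →ₗ[F] L) : Prop :=
  ∀ x y : L, d (b x y) = b (d x) y + b x (d y)

/-- `I`: the span of all squares `[x,x]`, `x ∈ L`. -/
def sqSpan (b : L →ₗ[F] L →ₗ[F] L) : Submodule F L :=
  Submodule.span F {z : L | ∃ x : L, z = b x x}

/-- The centre `Z(L) = {z | [z,x] = [x,z] = 0 for all x}`. -/
def lcenter (b : L →ₗ[F] L →ₗ[F] L) : Submodule F L where
  carrier := {z : L | ∀ x : L, b z x = 0 ∧ b x z = 0}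
  zero_mem' := by intro x; simp
  add_mem' := by
    intro y z hy hz x
    obtain ⟨h1, h2⟩ := hy x
    obtain ⟨h3, h4⟩ := hz x
    constructor <;> simp [h1, h2, h3, h4]
  smul_mem' := by
    intro c z hz x
    obtain ⟨h1, h2⟩ := hz x
    constructor <;> simp [h1, h2]

/-- The centre of a subalgebra `E`, as a subspace of `L`:
`Z(E) = {z ∈ E | [z,x] = [x,z] = 0 for all x ∈ E}`. -/
def centerIn (b : L →ₗ[F] L →ₗ[F] L) (E : Submodule F L) : Submodule F L where
  carrier := {z : L | z ∈ E ∧ ∀ x ∈ E, b z x = 0 ∧ b x z = 0}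
  zero_mem' := ⟨E.zero_mem, by intro x _; simp⟩
  add_mem' := by
    intro y z hy hz
    refine ⟨E.add_mem hy.1 hz.1, fun x hx => ?_⟩
    obtain ⟨h1, h2⟩ := hy.2 x hx
    obtain ⟨h3, h4⟩ := hz.2 x hx
    constructor <;> simp [h1, h2, h3, h4]
  smul_mem' := by
    intro c z hz
    refine ⟨E.smul_mem c hz.1, fun x hx => ?_⟩
    obtain ⟨h1, h2⟩ := hz.2 x hx
    constructor <;> simp [h1, h2]

/-- The subalgebra generated by a set `S`. -/
def subalgGen (b : L →ₗ[F] L →ₗ[F] L) (S : Set L) : Submodule F L :=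
  sInf {K : Submodule F L | IsSubalgebra b K ∧ S ⊆ K}

/-- `x` is a left Engel element: for each `y` there is `n` with `R_x^n(y) = 0`,
where `R_x(y) = [y,x]`. -/
def IsLeftEngel (b : L →ₗ[F] L →ₗ[F] L) (x : L) : Prop :=
  ∀ y : L, ∃ n : ℕ, ((b.flip x) ^ n) y = 0

end LeibnizDefs

variable {F L : Type*} [Field F] [AddCommGroup L] [Module F L]

namespace SQaux

variable (b : L →ₗ[F] L →ₗ[F] L)

lemma mem_bspan {A C : Submodule F L} {a c : L} (ha : a ∈ A) (hc : c ∈ C) :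
    b a c ∈ bspan b A C :=
  Submodule.subset_span ⟨a, ha, c, hc, rfl⟩

lemma bspan_le {A C D : Submodule F L} (h : ∀ a ∈ A, ∀ c ∈ C, b a c ∈ D) :
    bspan b A C ≤ D := by
  rw [bspan, Submodule.span_le]
  rintro z ⟨a, ha, c, hc, rfl⟩
  exact h a ha c hc

lemma bspan_mono {A A' C C' : Submodule F L} (h1 : A ≤ A') (h2 : C ≤ C') :
    bspan b A C ≤ bspan b A' C' :=
  bspan_le b fun a ha c hc => mem_bspan b (h1 ha) (h2 hc)

/-- generator-to-span upgrade for pairs of memberships -/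
lemma pair_of_bspan {A C D D' : Submodule F L} {x : L}
    (h : ∀ a ∈ A, ∀ c ∈ C, b x (b a c) ∈ D ∧ b (b a c) x ∈ D') :
    ∀ w ∈ bspan b A C, b x w ∈ D ∧ b w x ∈ D' := by
  intro w hw
  have hle : bspan b A C ≤ (D.comap (b x)) ⊓ (D'.comap (b.flip x)) := by
    refine bspan_le b fun a ha c hc => ?_
    exact ⟨(h a ha c hc).1, (h a ha c hc).2⟩
  exact ⟨(hle hw).1, (hle hw).2⟩

lemma derSeries_mono {H H' : Submodule F L} (h : H ≤ H') (k : ℕ) :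
    derSeries b H k ≤ derSeries b H' k := by
  induction k with
  | zero => exact h
  | succ k ih => exact bspan_mono b ih ih

lemma derSeries_succ_le {H : Submodule F L} (hH : IsSubalgebra b H) (k : ℕ) :
    derSeries b H (k + 1) ≤ derSeries b H k := by
  induction k with
  | zero => exact hH
  | succ k ih => exact bspan_mono b ih ih

lemma derSeries_le {H : Submodule F L} (hH : IsSubalgebra b H) {j k : ℕ} (h : j ≤ k) :
    derSeries b H k ≤ derSeries b H j := by
  induction k with
  | zero => simp_all
  | succ k ih =>
    rcases Nat.eq_or_lt_of_le h with rfl | h'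
    · exact le_rfl
    · exact le_trans (derSeries_succ_le b hH k) (ih (Nat.lt_succ_iff.mp h'))

variable (hb : IsLeibniz b)
include hb

/-- Derived terms are (two-sided) ideals of `H`. -/
lemma ideal_in_self {H : Submodule F L} (hH : IsSubalgebra b H) (k : ℕ) :
    ∀ a ∈ H, ∀ w ∈ derSeries b H k,
      b a w ∈ derSeries b H k ∧ b w a ∈ derSeries b H k := by
  induction k with
  | zero =>
    intro a ha w hw
    exact ⟨hH (mem_bspan b ha hw), hH (mem_bspan b hw ha)⟩
  | succ k ih =>
    intro a ha w hw
    refine pair_of_bspan b (fun u hu v hv => ?_) w hw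
    constructor
    · rw [hb a u v]
      exact Submodule.sub_mem _ (mem_bspan b (ih a ha u hu).1 hv)
        (mem_bspan b (ih a ha v hv).1 hu)
    · have key : b (b u v) a = b u (b v a) + b (b u a) v := by
        rw [hb u v a]; abel
      rw [key]
      exact Submodule.add_mem _ (mem_bspan b hu (ih a ha v hv).2)
        (mem_bspan b (ih a ha u hu).2 hv)

/-- One quasi-ideal step: `[x,[u,v]], [[u,v],x] ∈ H` for `x ∈ E`, `u,v ∈ H`. -/
lemma quasi_step {H E : Submodule F L} (hq : IsQuasiIdealIn b H E) :
    ∀ x ∈ E, ∀ w ∈ bspan b H H, b x w ∈ H ∧ b w x ∈ H := by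
  have hsub : IsSubalgebra b H := by
    have := hq.2 H hq.1
    simpa [IsSubalgebra] using this
  intro x hx
  refine pair_of_bspan b (fun u hu v hv => ?_)
  -- decompositions from the quasi-ideal property with K = span {x}
  have hK : Submodule.span F {x} ≤ E := by
    rw [Submodule.span_le]; simpa using hx
  have hmem : ∀ h ∈ H, (∃ p ∈ H, ∃ c : F, b h x = p + c • x) ∧
      (∃ q ∈ H, ∃ c : F, b x h = q + c • x) := by
    intro h hh
    have hx' : x ∈ Submodule.span F ({x} : Set L) := Submodule.mem_span_singleton_self x
    have h1 : b h x ∈ H ⊔ Submodule.span F {x} :=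
      hq.2 _ hK (le_sup_left (α := Submodule F L)
        (b := bspan b (Submodule.span F {x}) H) (mem_bspan b hh hx'))
    have h2 : b x h ∈ H ⊔ Submodule.span F {x} :=
      hq.2 _ hK (le_sup_right (α := Submodule F L)
        (a := bspan b H (Submodule.span F {x})) (mem_bspan b hx' hh))
    constructor
    · rcases Submodule.mem_sup.mp h1 with ⟨p, hp, y, hy, hpy⟩
      rcases Submodule.mem_span_singleton.mp hy with ⟨c, rfl⟩
      exact ⟨p, hp, c, hpy.symm⟩
    · rcases Submodule.mem_sup.mp h2 with ⟨q, hqm, y, hy, hqy⟩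
      rcases Submodule.mem_span_singleton.mp hy with ⟨c, rfl⟩
      exact ⟨q, hqm, c, hqy.symm⟩
  obtain ⟨⟨pu, hpu, lu, epu⟩, ⟨qu, hqu, mu, equ⟩⟩ := hmem u hu
  obtain ⟨⟨pv, hpv, lv, epv⟩, ⟨qv, hqv, mv, eqv⟩⟩ := hmem v hv
  constructor
  · -- b x (b u v) = b qu v + mu • qv - b qv u - mv • qu
    have key : b x (b u v) = b qu v + mu • qv - (b qv u + mv • qu) := by
      rw [hb x u v, equ, eqv]
      simp only [map_add, map_smul, LinearMap.add_apply, LinearMap.smul_apply]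
      rw [equ, eqv]
      module
    rw [key]
    exact Submodule.sub_mem _
      (Submodule.add_mem _ (hsub (mem_bspan b hqu hv)) (Submodule.smul_mem _ _ hqv))
      (Submodule.add_mem _ (hsub (mem_bspan b hqv hu)) (Submodule.smul_mem _ _ hqu))
  · -- b (b u v) x = b pu v + lu • qv - (b u qv + mv • pu)
    have key0 : b (b u v) x = b (b u x) v - b u (b x v) := by
      rw [hb u x v]; abel
    have key : b (b u v) x = b pu v + lu • qv - (b u qv + mv • pu) := by
      rw [key0, epu, eqv]
      simp only [map_add, map_smul, LinearMap.add_apply, LinearMap.smul_apply]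
      rw [eqv, epu]
      module
    rw [key]
    exact Submodule.sub_mem _
      (Submodule.add_mem _ (hsub (mem_bspan b hpu hv)) (Submodule.smul_mem _ _ hqv))
      (Submodule.add_mem _ (hsub (mem_bspan b hu hqv)) (Submodule.smul_mem _ _ hpu))

lemma chain_lemma {m : ℕ} {H : Submodule F L} (hH : IsSubquasiIdealSteps b m H) :
    ∀ x : L, ∀ w ∈ derSeries b H m, b x w ∈ H ∧ b w x ∈ H := by
  obtain ⟨C, hC0, hCm, hsubalg, hchain⟩ := hH
  have hHsub : IsSubalgebra b H := hCm ▸ hsubalg m le_rfl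
  -- H ≤ C i for i ≤ m
  have hle : ∀ i j : ℕ, i ≤ j → j ≤ m → C j ≤ C i := by
    intro i j hij hjm
    induction j with
    | zero => simp_all
    | succ j ih =>
      rcases Nat.eq_or_lt_of_le hij with rfl | h'
      · exact le_rfl
      · exact le_trans (hchain j (by omega)).1 (ih (by omega) (by omega))
  have hHle : ∀ i ≤ m, H ≤ C i := fun i hi => hCm ▸ hle i m hi le_rfl
  have R : ∀ j, j ≤ m → ∀ x ∈ C (m - j), ∀ w ∈ derSeries b H j,
      b x w ∈ H ∧ b w x ∈ H := by
    intro j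
    induction j with
    | zero =>
      intro _ x hx w hw
      have hx' : x ∈ H := by rwa [Nat.sub_zero, hCm] at hx
      exact ⟨hHsub (mem_bspan b hx' hw), hHsub (mem_bspan b hw hx')⟩
    | succ j ih =>
      intro hj x hx w hw
      have hqi := hchain (m - (j + 1)) (by omega)
      have hidx : m - (j + 1) + 1 = m - j := by omega
      rw [hidx] at hqi
      rcases Nat.eq_zero_or_pos j with rfl | hjpos
      · -- j = 0 : directly the quasi-ideal step
        have hCmj : C (m - 0) = H := by rw [Nat.sub_zero, hCm]
        rw [hCmj] at hqi
        exact quasi_step b hb hqi x hx w hw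
      · have hC' : IsSubalgebra b (C (m - j)) := hsubalg _ (by omega)
        have hmem : ∀ u ∈ derSeries b H j, u ∈ bspan b (C (m - j)) (C (m - j)) := by
          intro u hu
          have h1 : derSeries b H j ≤ derSeries b (C (m - j)) j :=
            derSeries_mono b (hHle _ (by omega)) j
          have h2 : derSeries b (C (m - j)) j ≤ derSeries b (C (m - j)) 1 :=
            derSeries_le b hC' hjpos
          exact h2 (h1 hu)
        have ihj := ih (by omega)
        refine pair_of_bspan b (fun u hu v hv => ?_) w hw
        have hxu := quasi_step b hb hqi x hx u (hmem u hu)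
        have hxv := quasi_step b hb hqi x hx v (hmem v hv)
        constructor
        · rw [hb x u v]
          exact Submodule.sub_mem _ (ihj _ hxu.1 v hv).1 (ihj _ hxv.1 u hu).1
        · have key : b (b u v) x = b u (b v x) + b (b u x) v := by
            rw [hb u v x]; abel
          rw [key]
          exact Submodule.add_mem _ (ihj _ hxv.2 u hu).2 (ihj _ hxu.2 v hv).1
  intro x w hw
  have := R m le_rfl x (by rw [Nat.sub_self, hC0]; trivial) w hw
  exact this


end SQaux

/-- If `H` is an `m`-step subquasi-ideal of a Leibniz algebra `L`,
then `[L,H^{(m+n+1)}] + [H^{(m+n+1)},L] ⊆ H^{(m+n)}` for all `n ≥ 1`.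
Here `H^{(k)} = derSeries b H (k-1)`. -/
theorem bracket_derSeries_le_of_subquasiIdealSteps (b : L →ₗ[F] L →ₗ[F] L) (hb : IsLeibniz b)
    (m : ℕ) (H : Submodule F L) (hH : IsSubquasiIdealSteps b m H) (n : ℕ) (hn : 1 ≤ n) :
    bspan b ⊤ (derSeries b H (m + n)) ⊔ bspan b (derSeries b H (m + n)) ⊤ ≤
      derSeries b H (m + n - 1) := by
  open SQaux in
  have hHsub : IsSubalgebra b H := by
    obtain ⟨C, hC0, hCm, hsubalg, _⟩ := hH
    exact hCm ▸ hsubalg m le_rfl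
  have L3 := SQaux.chain_lemma b hb hH
  obtain ⟨s, hs⟩ : ∃ s, m + n = s + 1 := ⟨m + n - 1, by omega⟩
  have hms : m ≤ s := by omega
  have main : ∀ x : L, ∀ w ∈ derSeries b H (s + 1),
      b x w ∈ derSeries b H s ∧ b w x ∈ derSeries b H s := by
    intro x w hw
    refine SQaux.pair_of_bspan b (fun u hu v hv => ?_) w hw
    have hum : u ∈ derSeries b H m := SQaux.derSeries_le b hHsub hms hu
    have hvm : v ∈ derSeries b H m := SQaux.derSeries_le b hHsub hms hv
    have hxu := L3 x u hum
    have hxv := L3 x v hvm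
    constructor
    · rw [hb x u v]
      exact Submodule.sub_mem _
        (SQaux.ideal_in_self b hb hHsub s _ hxu.1 v hv).1
        (SQaux.ideal_in_self b hb hHsub s _ hxv.1 u hu).1
    · have key : b (b u v) x = b u (b v x) + b (b u x) v := by
        rw [hb u v x]; abel
      rw [key]
      exact Submodule.add_mem _
        (SQaux.ideal_in_self b hb hHsub s _ hxv.2 u hu).2
        (SQaux.ideal_in_self b hb hHsub s _ hxu.2 v hv).1
  have hgoal : m + n - 1 = s := by omega
  rw [hgoal, hs]
  refine sup_le (SQaux.bspan_le b fun x _ w hw => (main x w hw).1)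
    (SQaux.bspan_le b fun w hw x _ => (main x w hw).2)
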